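/- Let d ≥ 2 and let W₁, …, W_{d²−1} ∈ Matrix (Fin d) (Fin d) ℂ be unitary matrices with Tr(Wⱼ) = 0 for all j and Tr(Wⱼᴴ W_k) = 0 for all j ≠ k. Then for every unit vector ψ ∈ ℂ^d: (2/(d²−1)) ∑_{j=1}^{d²−1} √(1 − |⟨ψ, Wⱼ ψ⟩|²) ≤ 2 √(d/(d+1)). (This bounds the NE norm of the difference of the corresponding flagged channels with Kraus operators 1/√(d²−1) and Wⱼ/√(d²−1).) -/

import Mathlib

open Matrix Kronecker BigOperators ComplexOrder

noncomputable def traceNorm {n : Type*} [Fintype n] [DecidableEq n] (A : Matrix n n ℂ) : ℝ :=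
  ((((Matrix.posSemidef_conjTranspose_mul_self A).1.eigenvectorUnitary : Matrix n n ℂ) *
    Matrix.diagonal ((fun x : ℝ => (x : ℂ)) ∘ (Real.sqrt ·) ∘ (Matrix.posSemidef_conjTranspose_mul_self A).1.eigenvalues) *
    (star (Matrix.posSemidef_conjTranspose_mul_self A).1.eigenvectorUnitary : Matrix n n ℂ)).trace).re

def IsDensity {n : Type*} [Fintype n] (ρ : Matrix n n ℂ) : Prop :=
  ρ.PosSemidef ∧ ρ.trace = 1

def tensorId {X Y Z : Type*} (Φ : Matrix X X ℂ → Matrix Y Y ℂ)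
    (ρ : Matrix (X × Z) (X × Z) ℂ) : Matrix (Y × Z) (Y × Z) ℂ :=
  Matrix.of fun p q => Φ (Matrix.of fun x x' => ρ (x, p.2) (x', q.2)) p.1 q.1

noncomputable def ChoiMatrix {X Y : Type*} [Fintype X] [DecidableEq X] [Fintype Y]
    (Φ : Matrix X X ℂ → Matrix Y Y ℂ) : Matrix (Y × X) (Y × X) ℂ :=
  ∑ j : X, ∑ k : X, (Φ (Matrix.single j k 1)) ⊗ₖ (Matrix.single j k 1)

def IsChannel {X Y : Type*} [Fintype X] [DecidableEq X] [Fintype Y]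
    (Φ : Matrix X X ℂ →ₗ[ℂ] Matrix Y Y ℂ) : Prop :=
  (∀ M, (Φ M).trace = M.trace) ∧ (ChoiMatrix (⇑Φ)).PosSemidef

def SeparableOp {Y Z : Type*} [Fintype Y] [Fintype Z]
    (P : Matrix (Y × Z) (Y × Z) ℂ) : Prop :=
  ∃ (N : ℕ) (Q : Fin N → Matrix Y Y ℂ) (R : Fin N → Matrix Z Z ℂ),
    (∀ i, (Q i).PosSemidef) ∧ (∀ i, (R i).PosSemidef) ∧ P = ∑ i, Q i ⊗ₖ R i

def partialTranspose {Y Z : Type*} (M : Matrix (Y × Z) (Y × Z) ℂ) :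
    Matrix (Y × Z) (Y × Z) ℂ :=
  Matrix.of fun p q => M (p.1, q.2) (q.1, p.2)

def IsPPT {Y Z : Type*} [Fintype Y] [Fintype Z] (M : Matrix (Y × Z) (Y × Z) ℂ) : Prop :=
  M.PosSemidef ∧ (partialTranspose M).PosSemidef

open scoped InnerProductSpace

lemma parseval_traceless_unitaries
    (d : ℕ) (hd : 2 ≤ d) (W : Fin (d ^ 2 - 1) → Matrix (Fin d) (Fin d) ℂ)
    (hWunit : ∀ j, (W j)ᴴ * W j = 1)
    (hWtr : ∀ j, (W j).trace = 0)
    (hWorth : ∀ j k, j ≠ k → ((W j)ᴴ * W k).trace = 0)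
    (ψ : Fin d → ℂ) (hψ : star ψ ⬝ᵥ ψ = 1) :
    ∑ j, (‖star ψ ⬝ᵥ (W j).mulVec ψ‖ ^ 2 : ℝ) = (d : ℝ) - 1 := by
  classical
  have hd0 : (0:ℝ) < (d:ℝ) := by positivity
  set c : ℂ := ((Real.sqrt d : ℝ) : ℂ) with hc
  have hc2 : c * c = (d : ℂ) := by
    rw [hc, ← Complex.ofReal_mul, Real.mul_self_sqrt hd0.le]; norm_cast
  have hcconj : (starRingEnd ℂ) c = c := Complex.conj_ofReal _
  have hcne : c ≠ 0 := by
    simp only [hc, ne_eq, Complex.ofReal_eq_zero]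
    positivity
  -- the matrices, indexed by Option
  set M : Option (Fin (d ^ 2 - 1)) → Matrix (Fin d) (Fin d) ℂ :=
    fun o => o.elim 1 W with hM
  -- embed into EuclideanSpace
  set e : Option (Fin (d ^ 2 - 1)) → EuclideanSpace ℂ (Fin d × Fin d) :=
    fun o => (WithLp.equiv 2 _).symm (fun p => c⁻¹ * (M o) p.1 p.2) with he
  have inner_ee : ∀ o o', ⟪e o, e o'⟫_ℂ = (d : ℂ)⁻¹ * ((M o)ᴴ * (M o')).trace := by
    intro o o'
    simp only [he, PiLp.inner_apply, RCLike.inner_apply, WithLp.equiv_symm_apply, PiLp.toLp_apply,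
      _root_.map_mul, map_inv₀, hcconj, Matrix.trace, Matrix.diag, Matrix.mul_apply,
      Matrix.conjTranspose_apply, Fintype.sum_prod_type]
    rw [Finset.mul_sum, Finset.sum_comm]
    refine Finset.sum_congr rfl fun i _ => ?_
    rw [Finset.mul_sum]
    refine Finset.sum_congr rfl fun k _ => ?_
    have : c⁻¹ * c⁻¹ = (d:ℂ)⁻¹ := by rw [← mul_inv, hc2]
    rw [← this]; push_cast [Complex.star_def]; ring
  have hdC : (d : ℂ) ≠ 0 := by exact_mod_cast hd0.ne'
  have horth : Orthonormal ℂ e := by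
    rw [orthonormal_iff_ite]
    intro o o'
    rw [inner_ee]
    rcases o with _ | j <;> rcases o' with _ | k
    · simp [hM, Matrix.trace_one, inv_mul_cancel₀ hdC]
    · simp [hM, hWtr k]
    · have : ((W j)ᴴ * 1).trace = 0 := by
        rw [Matrix.mul_one, Matrix.trace_conjTranspose, hWtr j, star_zero]
      simp only [hM, Option.elim] at this ⊢
      simp only [this, mul_zero]
      simp
    · by_cases hjk : j = k
      · subst hjk
        simp [hM, hWunit j, Matrix.trace_one, inv_mul_cancel₀ hdC]
      · simp [hM, hWorth j k hjk, hjk]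
  -- dimension count
  have hcard : Fintype.card (Option (Fin (d ^ 2 - 1)))
      = Module.finrank ℂ (EuclideanSpace ℂ (Fin d × Fin d)) := by
    rw [Fintype.card_option, Fintype.card_fin, finrank_euclideanSpace,
      Fintype.card_prod, Fintype.card_fin]
    have h1 : d * d = d ^ 2 := (sq d).symm
    have h2 : 1 ≤ d ^ 2 := Nat.one_le_pow _ _ (by omega)
    omega
  have hNE : Nonempty (Option (Fin (d ^ 2 - 1))) := ⟨none⟩
  set b0 := basisOfOrthonormalOfCardEqFinrank horth hcard with hb0
  have hb0e : ⇑b0 = e := coe_basisOfOrthonormalOfCardEqFinrank horth hcard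
  have horth' : Orthonormal ℂ ⇑b0 := hb0e ▸ horth
  set b := b0.toOrthonormalBasis horth' with hb
  have hbe : ∀ o, b o = e o := by
    intro o
    rw [hb, Module.Basis.coe_toOrthonormalBasis, hb0e]
  -- the vector
  set x : EuclideanSpace ℂ (Fin d × Fin d) :=
    (WithLp.equiv 2 _).symm (fun p => ψ p.1 * (starRingEnd ℂ) (ψ p.2)) with hx
  have hpars := b.sum_inner_mul_inner x x
  have inner_ex : ∀ o, ⟪e o, x⟫_ℂ
      = c⁻¹ * (starRingEnd ℂ) (star ψ ⬝ᵥ (M o).mulVec ψ) := by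
    intro o
    simp only [hx, he, PiLp.inner_apply, RCLike.inner_apply, WithLp.equiv_symm_apply, PiLp.toLp_apply,
      _root_.map_mul, map_inv₀, hcconj, dotProduct, mulVec, map_sum,
      Fintype.sum_prod_type, Pi.star_apply]
    simp only [Finset.mul_sum]
    refine Finset.sum_congr rfl fun i _ => Finset.sum_congr rfl fun k _ => ?_
    simp only [RCLike.star_def, _root_.map_mul, Complex.conj_conj]
    ring
  have inner_xx : ⟪x, x⟫_ℂ = 1 := by
    have : ((starRingEnd ℂ) (star ψ ⬝ᵥ ψ)) = 1 := by rw [hψ]; simp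
    simp only [hx, PiLp.inner_apply, RCLike.inner_apply, WithLp.equiv_symm_apply, PiLp.toLp_apply,
      _root_.map_mul, Complex.conj_conj, Fintype.sum_prod_type]
    calc (∑ i, ∑ k, ψ i * (starRingEnd ℂ) (ψ k) * ((starRingEnd ℂ) (ψ i) * ψ k))
        = (∑ i, (starRingEnd ℂ) (ψ i) * ψ i) * ∑ k, ψ k * (starRingEnd ℂ) (ψ k) := by
          rw [Finset.sum_mul_sum]
          exact Finset.sum_congr rfl fun i _ => Finset.sum_congr rfl fun k _ => by ring
      _ = 1 := by
          have h1 : (∑ i, (starRingEnd ℂ) (ψ i) * ψ i) = 1 := by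
            simpa [dotProduct, Pi.star_apply, RCLike.star_def] using hψ
          have h2 : (∑ k, ψ k * (starRingEnd ℂ) (ψ k)) = 1 := by
            rw [← h1]; exact Finset.sum_congr rfl fun k _ => mul_comm _ _
          rw [h1, h2, one_mul]
  have hterm : ∀ o, ⟪x, b o⟫_ℂ * ⟪b o, x⟫_ℂ
      = (d : ℂ)⁻¹ * ((‖star ψ ⬝ᵥ (M o).mulVec ψ‖ ^ 2 : ℝ) : ℂ) := by
    intro o
    rw [hbe, ← inner_conj_symm x (e o), inner_ex]
    set s := star ψ ⬝ᵥ (M o).mulVec ψ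
    simp only [_root_.map_mul, map_inv₀, hcconj, Complex.conj_conj]
    have : (c⁻¹ * s) * (c⁻¹ * (starRingEnd ℂ) s) = (c⁻¹ * c⁻¹) * (s * (starRingEnd ℂ) s) := by
      ring
    rw [this, Complex.mul_conj, ← mul_inv, hc2, Complex.normSq_eq_norm_sq]
  rw [inner_xx] at hpars
  simp only [hterm] at hpars
  rw [Fintype.sum_option] at hpars
  have hnone : star ψ ⬝ᵥ (M none).mulVec ψ = 1 := by
    simp only [hM, Option.elim, Matrix.one_mulVec]
    exact hψ
  rw [hnone] at hpars
  norm_num at hpars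
  simp only [hM, Option.elim] at hpars
  have hsum : ((∑ j, (‖star ψ ⬝ᵥ (W j).mulVec ψ‖ ^ 2 : ℝ)) : ℂ)
      = (d : ℂ) - 1 := by
    push_cast
    rw [← Finset.mul_sum] at hpars
    field_simp at hpars
    linear_combination hpars
  exact_mod_cast hsum


lemma abs_inner_le_one_of_unitary
    (d : ℕ) (W : Matrix (Fin d) (Fin d) ℂ) (hW : Wᴴ * W = 1)
    (ψ : Fin d → ℂ) (hψ : star ψ ⬝ᵥ ψ = 1) :
    ‖star ψ ⬝ᵥ W.mulVec ψ‖ ≤ 1 := by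
  set u : EuclideanSpace ℂ (Fin d) := (WithLp.equiv 2 _).symm ψ with hu
  set v : EuclideanSpace ℂ (Fin d) := (WithLp.equiv 2 _).symm (W.mulVec ψ) with hv
  have hinner : ⟪u, v⟫_ℂ = star ψ ⬝ᵥ W.mulVec ψ := by
    simp [hu, hv, PiLp.inner_apply, RCLike.inner_apply, dotProduct, mul_comm]
  have hWψ : star (W.mulVec ψ) ⬝ᵥ (W.mulVec ψ) = 1 := by
    rw [star_mulVec, ← dotProduct_mulVec, Matrix.mulVec_mulVec, hW]
    simpa using hψ
  have hnu : ‖u‖ = 1 := by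
    have h : (‖u‖ : ℝ) ^ 2 = 1 := by
      rw [InnerProductSpace.norm_sq_eq_re_inner (𝕜 := ℂ)]
      have : ⟪u, u⟫_ℂ = star ψ ⬝ᵥ ψ := by
        rw [hu, PiLp.inner_apply]; simp [RCLike.inner_apply, dotProduct, mul_comm, Complex.mul_conj, Complex.normSq_eq_norm_sq]
      rw [this, hψ]; simp
    nlinarith [norm_nonneg u]
  have hnv : ‖v‖ = 1 := by
    have h : (‖v‖ : ℝ) ^ 2 = 1 := by
      rw [InnerProductSpace.norm_sq_eq_re_inner (𝕜 := ℂ)]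
      have : ⟪v, v⟫_ℂ = star (W.mulVec ψ) ⬝ᵥ (W.mulVec ψ) := by
        rw [hv, PiLp.inner_apply]; simp [RCLike.inner_apply, dotProduct, mul_comm, Complex.mul_conj, Complex.normSq_eq_norm_sq]
      rw [this, hWψ]; simp
    nlinarith [norm_nonneg v]
  have := norm_inner_le_norm (𝕜 := ℂ) u v
  rw [hinner, hnu, hnv] at this
  simpa using this

theorem ne_norm_bound_for_unitary_flagged_channels'
    (d : ℕ) (hd : 2 ≤ d) (W : Fin (d ^ 2 - 1) → Matrix (Fin d) (Fin d) ℂ)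
    (hWunit : ∀ j, (W j)ᴴ * W j = 1)
    (hWtr : ∀ j, (W j).trace = 0)
    (hWorth : ∀ j k, j ≠ k → ((W j)ᴴ * W k).trace = 0)
    (ψ : Fin d → ℂ) (hψ : star ψ ⬝ᵥ ψ = 1) :
    2 / ((d : ℝ) ^ 2 - 1) *
        ∑ j, Real.sqrt (1 - ‖star ψ ⬝ᵥ (W j).mulVec ψ‖ ^ 2)
      ≤ 2 * Real.sqrt ((d : ℝ) / ((d : ℝ) + 1)) := by
  set D : ℝ := (d : ℝ) with hD
  have hD2 : (2 : ℝ) ≤ D := by rw [hD]; exact_mod_cast hd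
  set a : Fin (d ^ 2 - 1) → ℝ :=
    fun j => ‖star ψ ⬝ᵥ (W j).mulVec ψ‖ ^ 2 with ha
  have hsum : ∑ j, a j = D - 1 :=
    parseval_traceless_unitaries d hd W hWunit hWtr hWorth ψ hψ
  have hle1 : ∀ j, a j ≤ 1 := by
    intro j
    have := abs_inner_le_one_of_unitary d (W j) (hWunit j) ψ hψ
    have h0 := norm_nonneg (star ψ ⬝ᵥ (W j).mulVec ψ)
    simp only [ha]; nlinarith
  set S : ℝ := ∑ j, Real.sqrt (1 - a j) with hS
  have hcard : ((Finset.univ : Finset (Fin (d ^ 2 - 1))).card : ℝ) = D ^ 2 - 1 := by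
    rw [Finset.card_univ, Fintype.card_fin]
    have h1 : 1 ≤ d ^ 2 := Nat.one_le_pow _ _ (by omega)
    push_cast [Nat.cast_sub h1]
    ring
  have hCS : S ^ 2 ≤ (D ^ 2 - 1) * (D ^ 2 - D) := by
    have h := sq_sum_le_card_mul_sum_sq (s := (Finset.univ : Finset (Fin (d ^ 2 - 1))))
      (f := fun j => Real.sqrt (1 - a j))
    have hsq : ∑ j, Real.sqrt (1 - a j) ^ 2 = D ^ 2 - D := by
      have : ∀ j ∈ Finset.univ, Real.sqrt (1 - a j) ^ 2 = 1 - a j := by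
        intro j _
        exact Real.sq_sqrt (by linarith [hle1 j])
      rw [Finset.sum_congr rfl this, Finset.sum_sub_distrib, hsum, Finset.sum_const,
        Finset.card_univ]
      have h1 : 1 ≤ d ^ 2 := Nat.one_le_pow _ _ (by omega)
      simp only [Fintype.card_fin, nsmul_eq_mul, mul_one]
      rw [Nat.cast_sub h1]
      push_cast
      ring
    calc S ^ 2 ≤ ((Finset.univ : Finset (Fin (d ^ 2 - 1))).card : ℝ)
          * ∑ j, Real.sqrt (1 - a j) ^ 2 := h
      _ = (D ^ 2 - 1) * (D ^ 2 - D) := by rw [hcard, hsq]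
  have hS0 : 0 ≤ S := Finset.sum_nonneg fun j _ => Real.sqrt_nonneg _
  have hn0 : (0 : ℝ) < D ^ 2 - 1 := by nlinarith
  have hDfrac : (0 : ℝ) ≤ D / (D + 1) := by positivity
  set R : ℝ := (D ^ 2 - 1) * Real.sqrt (D / (D + 1)) with hR
  have hR0 : 0 ≤ R := by positivity
  have hR2 : R ^ 2 = (D ^ 2 - 1) * (D ^ 2 - D) := by
    rw [hR, mul_pow, Real.sq_sqrt hDfrac]
    have hD1 : D + 1 ≠ 0 := by linarith
    field_simp
    ring
  have hSR : S ≤ R := by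
    nlinarith [hCS, hR2, hS0, hR0]
  calc 2 / (D ^ 2 - 1) * S ≤ 2 / (D ^ 2 - 1) * R := by
        apply mul_le_mul_of_nonneg_left hSR
        positivity
    _ = 2 * Real.sqrt (D / (D + 1)) := by
        rw [hR]
        field_simp

/-- the NE-norm bound for the channels flagged by traceless unitaries:
`(2/(d²-1)) ∑ⱼ √(1 - |⟨ψ, Wⱼ ψ⟩|²) ≤ 2 √(d/(d+1))`. -/
theorem ne_norm_bound_for_unitary_flagged_channels
    (d : ℕ) (hd : 2 ≤ d) (W : Fin (d ^ 2 - 1) → Matrix (Fin d) (Fin d) ℂ)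
    (hWunit : ∀ j, (W j)ᴴ * W j = 1)
    (hWtr : ∀ j, (W j).trace = 0)
    (hWorth : ∀ j k, j ≠ k → ((W j)ᴴ * W k).trace = 0)
    (ψ : Fin d → ℂ) (hψ : star ψ ⬝ᵥ ψ = 1) :
    2 / ((d : ℝ) ^ 2 - 1) *
        ∑ j, Real.sqrt (1 - ‖star ψ ⬝ᵥ (W j).mulVec ψ‖ ^ 2)
      ≤ 2 * Real.sqrt ((d : ℝ) / ((d : ℝ) + 1)) :=
  ne_norm_bound_for_unitary_flagged_channels' d hd W hWunit hWtr hWorth ψ hψ
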